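/- For every n-dimensional USO K (as a set of strings in {0,1,2,3}^n) there exists a generalized rewriting rule with 2 labels, using as sets the four subsets V_3, V_2, V_1, V_0 of {0,1,2,3}^{n-1} of prefixes of strings of K ending in 3, 2, 1, 0 respectively (assigned as S^(0)_1 = V_3, S^(2)_1 = V_2, S^(0)_2 = V_1, S^(2)_2 = V_0, with S^(1)_j = ∅ and S^(3)_j the canonical (n-1)-dimensional USO), such that applying it to the 2-dimensional bow {01, 20, 03, 22} with labelling L(01)=2, L(03)=1, L(20)=2, L(22)=1 at dimension h=1 yields exactly K. -/

import Mathlib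

/-- Strings `v` and `w` differ by exactly 2 in coordinate `i`. -/
def Diff2At (v w : List (Fin 4)) (i : ℕ) : Prop :=
  (v.getD i 0 : ℕ) = (w.getD i 0 : ℕ) + 2 ∨ (w.getD i 0 : ℕ) = (v.getD i 0 : ℕ) + 2

/-- A set of strings in `{0,1,2,3}^n` represents an `n`-dimensional USO
(a `4ℤ^n`-periodic cube tiling): all strings have length `n`, there are `2^n`
of them, and any two distinct ones differ by exactly 2 in some coordinate. -/
def IsUSOSet (n : ℕ) (K : Finset (List (Fin 4))) : Prop :=
  (∀ v ∈ K, v.length = n) ∧ K.card = 2 ^ n ∧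
    ∀ v ∈ K, ∀ w ∈ K, v ≠ w → ∃ i : ℕ, i < n ∧ Diff2At v w i

/-- Replace the entry of `v` at (0-indexed) position `h` by the string `s`. -/
def splice (v : List (Fin 4)) (h : ℕ) (s : List (Fin 4)) : List (Fin 4) :=
  v.take h ++ s ++ v.drop (h + 1)

/-- A simple rewriting rule `(S⁽⁰⁾, S⁽¹⁾, S⁽²⁾, S⁽³⁾)` with target dimension `d`. -/
def IsSimpleRule (d : ℕ) (S : Fin 4 → Finset (List (Fin 4))) : Prop :=
  Disjoint (S 0) (S 2) ∧ IsUSOSet d (S 0 ∪ S 2) ∧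
    Disjoint (S 1) (S 3) ∧ IsUSOSet d (S 1 ∪ S 3)

/-- Applying a simple rewriting rule at (0-indexed) dimension `h`:
`S_h(K) = ⋃_{v ∈ K} { v₁…v_{h-1} s v_{h+1}…v_k : s ∈ S^(v_h) }`. -/
def rewriteSet (S : Fin 4 → Finset (List (Fin 4))) (h : ℕ)
    (K : Finset (List (Fin 4))) : Finset (List (Fin 4)) :=
  K.biUnion fun v => (S (v.getD h 0)).image (splice v h)

/-- A generalized rewriting rule with labels in `Fin i` and target dimension `d`. -/
def IsGenRule (d i : ℕ) (S : Fin 4 → Fin i → Finset (List (Fin 4))) : Prop :=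
  (∀ j j' : Fin i, Disjoint (S 0 j) (S 2 j') ∧ IsUSOSet d (S 0 j ∪ S 2 j')) ∧
    (∀ j j' : Fin i, Disjoint (S 1 j) (S 3 j') ∧ IsUSOSet d (S 1 j ∪ S 3 j'))

/-- Applying a generalized rewriting rule at (0-indexed) dimension `h` to the
labelled USO `(K, L)`:
`T_h(K, L) = ⋃_{v ∈ K} { v₁…v_{h-1} t v_{h+1}…v_k : t ∈ S^(v_h)_{L(v)} }`. -/
def genRewrite {i : ℕ} (S : Fin 4 → Fin i → Finset (List (Fin 4)))
    (L : List (Fin 4) → Fin i) (h : ℕ) (K : Finset (List (Fin 4))) :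
    Finset (List (Fin 4)) :=
  K.biUnion fun v => (S (v.getD h 0) (L v)).image (splice v h)

/-- `V_m`: the set of prefixes (of length `n-1`) of the strings of `K`
whose last coordinate is `m`. -/
def Vm (n : ℕ) (K : Finset (List (Fin 4))) (m : Fin 4) : Finset (List (Fin 4)) :=
  (K.filter fun v => v.getD (n - 1) 0 = m).image fun v => v.take (n - 1)

/-- The canonical `d`-dimensional USO `{0,2}^d` (all edges downwards). -/
def canonicalUSO (d : ℕ) : Finset (List (Fin 4)) :=
  (Finset.univ : Finset (Fin d → Bool)).image fun f =>
    (List.ofFn f).map fun b => if b then (2 : Fin 4) else 0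

/-- The 2-dimensional bow `{01, 20, 03, 22}`. -/
def bow : Finset (List (Fin 4)) := {[0, 1], [2, 0], [0, 3], [2, 2]}

/-- The labelling `L(01) = 2, L(20) = 2, L(03) = 1, L(22) = 1`
(label `1` is `(0 : Fin 2)`, label `2` is `(1 : Fin 2)`). -/
def bowL : List (Fin 4) → Fin 2 :=
  fun v => if v = [0, 1] ∨ v = [2, 0] then 1 else 0

/-- The sets of the universality rewriting rule:
`S⁽⁰⁾₁ = V₃`, `S⁽²⁾₁ = V₂`, `S⁽⁰⁾₂ = V₁`, `S⁽²⁾₂ = V₀`,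
`S⁽¹⁾ⱼ = ∅`, `S⁽³⁾ⱼ` the canonical `(n-1)`-dimensional USO. -/
def univRule (n : ℕ) (K : Finset (List (Fin 4))) :
    Fin 4 → Fin 2 → Finset (List (Fin 4)) :=
  fun m j =>
    if m = 0 then (if j = 0 then Vm n K 3 else Vm n K 1)
    else if m = 2 then (if j = 0 then Vm n K 2 else Vm n K 0)
    else if m = 1 then ∅
    else canonicalUSO (n - 1)

/-- Universality: every `n`-dimensional USO `K` arises from the bow by a
generalized rewriting rule with 2 labels built from the facet-prefix sets of `K`. -/

lemma getD_tail' (v : List (Fin 4)) (i : ℕ) : v.getD (i+1) 0 = v.tail.getD i 0 := by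
  cases v <;> simp [List.getD]

lemma clique_bound : ∀ (d : ℕ) (A : Finset (List (Fin 4))),
    (∀ v ∈ A, v.length = d) →
    (∀ v ∈ A, ∀ w ∈ A, v ≠ w → ∃ i : ℕ, i < d ∧ Diff2At v w i) →
    A.card ≤ 2 ^ d := by
  intro d
  induction d with
  | zero =>
    intro A hlen _
    have hsub : A ⊆ {([] : List (Fin 4))} := by
      intro v hv
      simp [List.length_eq_zero_iff.mp (hlen v hv)]
    simpa using Finset.card_le_card hsub
  | succ d ih =>
    intro A hlen hdiff
    have step : ∀ B : Finset (List (Fin 4)), B ⊆ A →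
        (∀ v ∈ B, ∀ w ∈ B, ¬ Diff2At v w 0) → B.card ≤ 2 ^ d := by
      intro B hBA hB0
      have hinj : Set.InjOn (fun v : List (Fin 4) => v.tail) ↑B := by
        intro v hv w hw htl
        by_contra hne
        obtain ⟨i, _, hd⟩ := hdiff v (hBA hv) w (hBA hw) hne
        match i with
        | 0 => exact hB0 v hv w hw hd
        | (j+1) =>
          unfold Diff2At at hd
          rw [getD_tail' v j, getD_tail' w j, show v.tail = w.tail from htl] at hd
          omega
      have hle := ih (B.image List.tail) ?_ ?_
      · rwa [Finset.card_image_of_injOn hinj] at hle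
      · intro x hx
        obtain ⟨v, hv, rfl⟩ := Finset.mem_image.mp hx
        have := hlen v (hBA hv)
        simp [List.length_tail, this]
      · intro x hx y hy hxy
        obtain ⟨v, hv, rfl⟩ := Finset.mem_image.mp hx
        obtain ⟨w, hw, rfl⟩ := Finset.mem_image.mp hy
        have hvw : v ≠ w := fun h => hxy (by rw [h])
        obtain ⟨i, hi, hd⟩ := hdiff v (hBA hv) w (hBA hw) hvw
        match i with
        | 0 => exact absurd hd (hB0 v hv w hw)
        | (j+1) =>
          refine ⟨j, by omega, ?_⟩
          unfold Diff2At at hd ⊢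
          rw [getD_tail' v j, getD_tail' w j] at hd
          exact hd
    have h0 : (A.filter fun v => ((v.getD 0 0 : Fin 4) : ℕ) < 2).card ≤ 2 ^ d := by
      refine step _ (Finset.filter_subset _ _) ?_
      intro v hv w hw hd
      have h1 := (Finset.mem_filter.mp hv).2
      have h2 := (Finset.mem_filter.mp hw).2
      unfold Diff2At at hd
      omega
    have h1 : (A.filter fun v => ¬ ((v.getD 0 0 : Fin 4) : ℕ) < 2).card ≤ 2 ^ d := by
      refine step _ (Finset.filter_subset _ _) ?_
      intro v hv w hw hd
      have h1 := (Finset.mem_filter.mp hv).2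
      have h2 := (Finset.mem_filter.mp hw).2
      have h3 := (v.getD 0 0).isLt
      have h4 := (w.getD 0 0).isLt
      unfold Diff2At at hd
      omega
    have hsum := Finset.card_filter_add_card_filter_not
      (s := A) (fun v => ((v.getD 0 0 : Fin 4) : ℕ) < 2)
    have : 2 ^ (d + 1) = 2 ^ d + 2 ^ d := by ring
    omega

lemma concat_take {n : ℕ} (hn : 1 ≤ n) (v : List (Fin 4)) (hv : v.length = n) :
    v.take (n-1) ++ [v.getD (n-1) 0] = v := by
  rcases List.eq_nil_or_concat v with h | ⟨ys, a, rfl⟩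
  · subst h; simp at hv; omega
  · rw [List.concat_eq_append] at *
    have hys : ys.length = n - 1 := by
      simp at hv; omega
    rw [List.take_left' hys,
        List.getD_eq_getElem _ _ (by simp; omega),
        List.getElem_concat_length (l := ys) (a := a) hys.symm]

lemma getD_concat_lt (x : List (Fin 4)) (a : Fin 4) (i : ℕ) (hi : i < x.length) :
    (x ++ [a]).getD i 0 = x.getD i 0 := by
  rw [List.getD_eq_getElem _ _ (by simp; omega), List.getD_eq_getElem _ _ hi,
      List.getElem_append_left hi]

lemma getD_concat_len (x : List (Fin 4)) (a : Fin 4) :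
    (x ++ [a]).getD x.length 0 = a := by
  rw [List.getD_eq_getElem _ _ (by simp), List.getElem_concat_length (l := x) (a := a) rfl]

lemma mem_Vm {n : ℕ} (hn : 1 ≤ n) {K : Finset (List (Fin 4))}
    (hlen : ∀ v ∈ K, v.length = n) {m : Fin 4} {x : List (Fin 4)} :
    x ∈ Vm n K m ↔ x ++ [m] ∈ K ∧ x.length = n - 1 := by
  constructor
  · intro hx
    simp only [Vm, Finset.mem_image, Finset.mem_filter] at hx
    obtain ⟨v, ⟨hv, hvm⟩, rfl⟩ := hx
    have h1 := hlen v hv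
    have h2 := concat_take hn v h1
    rw [hvm] at h2
    rw [h2]
    refine ⟨hv, ?_⟩
    rw [List.length_take, h1]
    omega
  · rintro ⟨hmem, hx⟩
    simp only [Vm, Finset.mem_image, Finset.mem_filter]
    refine ⟨x ++ [m], ⟨hmem, ?_⟩, ?_⟩
    · rw [← hx, getD_concat_len]
    · rw [← hx, List.take_left' rfl]

lemma canonical_uso (d : ℕ) : IsUSOSet d (canonicalUSO d) := by
  have hginj : Function.Injective (fun b : Bool => if b then (2:Fin 4) else 0) := by decide
  refine ⟨?_, ?_, ?_⟩
  · intro v hv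
    simp only [canonicalUSO, Finset.mem_image] at hv
    obtain ⟨f, _, rfl⟩ := hv
    simp
  · rw [canonicalUSO, Finset.card_image_of_injective _
      (fun f g h => List.ofFn_injective (List.map_injective_iff.mpr hginj h))]
    simp
  · intro v hv w hw hvw
    simp only [canonicalUSO, Finset.mem_image] at hv hw
    obtain ⟨f, _, rfl⟩ := hv
    obtain ⟨g, _, rfl⟩ := hw
    have hfg : f ≠ g := fun h => hvw (by rw [h])
    obtain ⟨i, hi⟩ := Function.ne_iff.mp hfg
    refine ⟨i, i.isLt, ?_⟩
    unfold Diff2At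
    rw [List.getD_eq_getElem _ _ (by simp), List.getD_eq_getElem _ _ (by simp)]
    simp only [List.getElem_map, List.getElem_ofFn, Fin.eta]
    rcases Bool.eq_false_or_eq_true (f i) with hf | hf <;>
      rcases Bool.eq_false_or_eq_true (g i) with hg | hg <;>
        simp [hf, hg] at hi ⊢

lemma append_ne {x y : List (Fin 4)} {p q : Fin 4} (hxy : x ≠ y) (hl : x.length = y.length) :
    x ++ [p] ≠ y ++ [q] := fun h => hxy (by
  have h2 := congrArg (List.take x.length) h
  rwa [List.take_left' rfl, List.take_left' hl.symm] at h2)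

lemma Vm_pair_diff {n : ℕ} {K : Finset (List (Fin 4))} (hn : 1 ≤ n) (hK : IsUSOSet n K)
    {p q : Fin 4} (hpq : ¬((p:ℕ) = (q:ℕ) + 2 ∨ (q:ℕ) = (p:ℕ) + 2)) :
    ∀ x ∈ Vm n K p, ∀ y ∈ Vm n K q, x ≠ y → ∃ i : ℕ, i < n - 1 ∧ Diff2At x y i := by
  obtain ⟨hlen, hcard, hdiff⟩ := hK
  intro x hx y hy hxy
  obtain ⟨hxmem, hxlen⟩ := (mem_Vm hn hlen).mp hx
  obtain ⟨hymem, hylen⟩ := (mem_Vm hn hlen).mp hy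
  obtain ⟨i, hi, hd⟩ := hdiff _ hxmem _ hymem (append_ne hxy (hxlen.trans hylen.symm))
  rcases Nat.lt_or_ge i (n-1) with hi' | hi'
  · refine ⟨i, hi', ?_⟩
    unfold Diff2At at hd ⊢
    rwa [getD_concat_lt x p i (by omega), getD_concat_lt y q i (by omega)] at hd
  · exfalso
    have hieq : i = n - 1 := by omega
    subst hieq
    have e1 : (x ++ [p]).getD (n-1) 0 = p := by rw [← hxlen, getD_concat_len]
    have e2 : (y ++ [q]).getD (n-1) 0 = q := by rw [← hylen, getD_concat_len]
    unfold Diff2At at hd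
    rw [e1, e2] at hd
    exact hpq hd

lemma Vm_pair_disjoint {n : ℕ} {K : Finset (List (Fin 4))} (hn : 1 ≤ n) (hK : IsUSOSet n K)
    {p q : Fin 4} (hpq : ¬((p:ℕ) = (q:ℕ) + 2 ∨ (q:ℕ) = (p:ℕ) + 2)) (hne : p ≠ q) :
    Disjoint (Vm n K p) (Vm n K q) := by
  obtain ⟨hlen, hcard, hdiff⟩ := hK
  rw [Finset.disjoint_left]
  intro x hxp hxq
  obtain ⟨hxmem, hxlen⟩ := (mem_Vm hn hlen).mp hxp
  obtain ⟨hymem, _⟩ := (mem_Vm hn hlen).mp hxq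
  have hne' : x ++ [p] ≠ x ++ [q] := by
    intro h
    exact hne (by simpa using h)
  obtain ⟨i, hi, hd⟩ := hdiff _ hxmem _ hymem hne'
  rcases Nat.lt_or_ge i (n-1) with hi' | hi'
  · unfold Diff2At at hd
    rw [getD_concat_lt x p i (by omega), getD_concat_lt x q i (by omega)] at hd
    omega
  · have hieq : i = n - 1 := by omega
    subst hieq
    have e1 : (x ++ [p]).getD (n-1) 0 = p := by rw [← hxlen, getD_concat_len]
    have e2 : (x ++ [q]).getD (n-1) 0 = q := by rw [← hxlen, getD_concat_len]
    unfold Diff2At at hd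
    rw [e1, e2] at hd
    exact hpq hd

lemma Vm_len {n : ℕ} {K : Finset (List (Fin 4))} (hn : 1 ≤ n)
    (hlen : ∀ v ∈ K, v.length = n) {m : Fin 4} :
    ∀ x ∈ Vm n K m, x.length = n - 1 :=
  fun x hx => ((mem_Vm hn hlen).mp hx).2

lemma Vm_card {n : ℕ} {K : Finset (List (Fin 4))} (hn : 1 ≤ n)
    (hlen : ∀ v ∈ K, v.length = n) (m : Fin 4) :
    (Vm n K m).card = (K.filter fun v => v.getD (n-1) 0 = m).card := by
  rw [Vm]
  apply Finset.card_image_of_injOn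
  intro v hv w hw htk
  simp only [Finset.coe_filter, Set.mem_setOf_eq] at hv hw
  have h1 := concat_take hn v (hlen v hv.1)
  have h2 := concat_take hn w (hlen w hw.1)
  rw [hv.2] at h1
  rw [hw.2] at h2
  rw [← h1, ← h2, show v.take (n-1) = w.take (n-1) from htk]

theorem stmt11 (n : ℕ) (hn : 1 ≤ n) (K : Finset (List (Fin 4)))
    (hK : IsUSOSet n K) :
    IsGenRule (n - 1) 2 (univRule n K) ∧
      genRewrite (univRule n K) bowL 0 bow = K := by
  obtain ⟨hlen, hcard, hdiff⟩ := hK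
  have hK' : IsUSOSet n K := ⟨hlen, hcard, hdiff⟩
  -- counting
  have hsum : ∑ m : Fin 4, (K.filter fun v => v.getD (n-1) 0 = m).card = 2 ^ n := by
    rw [← hcard]
    exact (Finset.card_eq_sum_card_fiberwise (fun x _ => Finset.mem_univ _)).symm
  rw [Fin.sum_univ_four] at hsum
  -- pairwise diff for unions
  have hpair : ∀ p q : Fin 4, ¬((p:ℕ) = (q:ℕ) + 2 ∨ (q:ℕ) = (p:ℕ) + 2) →
      ∀ x ∈ Vm n K p ∪ Vm n K q, ∀ y ∈ Vm n K p ∪ Vm n K q, x ≠ y →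
        ∃ i : ℕ, i < n - 1 ∧ Diff2At x y i := by
    intro p q hpq x hx y hy hxy
    have hqp : ¬((q:ℕ) = (p:ℕ) + 2 ∨ (p:ℕ) = (q:ℕ) + 2) := by tauto
    have hpp : ¬((p:ℕ) = (p:ℕ) + 2 ∨ (p:ℕ) = (p:ℕ) + 2) := by omega
    have hqq : ¬((q:ℕ) = (q:ℕ) + 2 ∨ (q:ℕ) = (q:ℕ) + 2) := by omega
    rcases Finset.mem_union.mp hx with h1 | h1 <;> rcases Finset.mem_union.mp hy with h2 | h2
    · exact Vm_pair_diff hn hK' hpp x h1 y h2 hxy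
    · exact Vm_pair_diff hn hK' hpq x h1 y h2 hxy
    · exact Vm_pair_diff hn hK' hqp x h1 y h2 hxy
    · exact Vm_pair_diff hn hK' hqq x h1 y h2 hxy
  have hulen : ∀ p q : Fin 4, ∀ x ∈ Vm n K p ∪ Vm n K q, x.length = n - 1 := by
    intro p q x hx
    rcases Finset.mem_union.mp hx with h | h <;> exact Vm_len hn hlen x h
  have hub : ∀ p q : Fin 4, ¬((p:ℕ) = (q:ℕ) + 2 ∨ (q:ℕ) = (p:ℕ) + 2) →
      (Vm n K p ∪ Vm n K q).card ≤ 2 ^ (n-1) :=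
    fun p q hpq => clique_bound (n-1) _ (hulen p q) (hpair p q hpq)
  have hucard : ∀ p q : Fin 4, ¬((p:ℕ) = (q:ℕ) + 2 ∨ (q:ℕ) = (p:ℕ) + 2) → p ≠ q →
      (Vm n K p ∪ Vm n K q).card =
        (K.filter fun v => v.getD (n-1) 0 = p).card +
          (K.filter fun v => v.getD (n-1) 0 = q).card := by
    intro p q hpq hne
    rw [Finset.card_union_of_disjoint (Vm_pair_disjoint hn hK' hpq hne),
        Vm_card hn hlen, Vm_card hn hlen]
  have hpow : 2 ^ n = 2 ^ (n-1) + 2 ^ (n-1) := by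
    have h1 : n - 1 + 1 = n := by omega
    conv_lhs => rw [← h1]
    rw [pow_succ]
    omega
  have h32 := hub 3 2 (by decide); rw [hucard 3 2 (by decide) (by decide)] at h32
  have h10 := hub 1 0 (by decide); rw [hucard 1 0 (by decide) (by decide)] at h10
  have h30 := hub 3 0 (by decide); rw [hucard 3 0 (by decide) (by decide)] at h30
  have h12 := hub 1 2 (by decide); rw [hucard 1 2 (by decide) (by decide)] at h12
  have hc32 : (Vm n K 3 ∪ Vm n K 2).card = 2 ^ (n-1) := by
    rw [hucard 3 2 (by decide) (by decide)]; omega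
  have hc10 : (Vm n K 1 ∪ Vm n K 0).card = 2 ^ (n-1) := by
    rw [hucard 1 0 (by decide) (by decide)]; omega
  have hc30 : (Vm n K 3 ∪ Vm n K 0).card = 2 ^ (n-1) := by
    rw [hucard 3 0 (by decide) (by decide)]; omega
  have hc12 : (Vm n K 1 ∪ Vm n K 2).card = 2 ^ (n-1) := by
    rw [hucard 1 2 (by decide) (by decide)]; omega
  have husoc : ∀ p q : Fin 4, ¬((p:ℕ) = (q:ℕ) + 2 ∨ (q:ℕ) = (p:ℕ) + 2) →
      (Vm n K p ∪ Vm n K q).card = 2 ^ (n-1) → IsUSOSet (n-1) (Vm n K p ∪ Vm n K q) :=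
    fun p q hpq hc => ⟨hulen p q, hc, hpair p q hpq⟩
  refine ⟨⟨?_, ?_⟩, ?_⟩
  · intro j j'
    fin_cases j <;> fin_cases j'
    · exact ⟨Vm_pair_disjoint hn hK' (by decide) (by decide),
        husoc 3 2 (by decide) hc32⟩
    · exact ⟨Vm_pair_disjoint hn hK' (by decide) (by decide),
        husoc 3 0 (by decide) hc30⟩
    · exact ⟨Vm_pair_disjoint hn hK' (by decide) (by decide),
        husoc 1 2 (by decide) hc12⟩
    · exact ⟨Vm_pair_disjoint hn hK' (by decide) (by decide),
        husoc 1 0 (by decide) hc10⟩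
  · intro j j'
    constructor
    · show Disjoint (∅ : Finset (List (Fin 4))) (canonicalUSO (n-1))
      exact Finset.disjoint_empty_left _
    · show IsUSOSet (n-1) (∅ ∪ canonicalUSO (n-1))
      rw [Finset.empty_union]
      exact canonical_uso (n-1)
  · ext x
    simp only [genRewrite, Finset.mem_biUnion]
    constructor
    · rintro ⟨v, hv, hx⟩
      have hv' : v = [0,1] ∨ v = [2,0] ∨ v = [0,3] ∨ v = [2,2] := by
        simpa [bow] using hv
      rcases hv' with rfl | rfl | rfl | rfl <;>
        obtain ⟨s, hs, rfl⟩ := Finset.mem_image.mp hx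
      · exact ((mem_Vm hn hlen).mp (show s ∈ Vm n K 1 from hs)).1
      · exact ((mem_Vm hn hlen).mp (show s ∈ Vm n K 0 from hs)).1
      · exact ((mem_Vm hn hlen).mp (show s ∈ Vm n K 3 from hs)).1
      · exact ((mem_Vm hn hlen).mp (show s ∈ Vm n K 2 from hs)).1
    · intro hx
      have hm4 : ∀ a : Fin 4, a = 0 ∨ a = 1 ∨ a = 2 ∨ a = 3 := by decide
      have hxt := concat_take hn x (hlen x hx)
      have hxv : x.take (n-1) ∈ Vm n K (x.getD (n-1) 0) :=
        (mem_Vm hn hlen).mpr ⟨by rw [hxt]; exact hx,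
          by rw [List.length_take, hlen x hx]; omega⟩
      rcases hm4 (x.getD (n-1) 0) with hm | hm | hm | hm <;> rw [hm] at hxt hxv
      · exact ⟨[2,0], by simp [bow],
          Finset.mem_image.mpr ⟨x.take (n-1), hxv, hxt⟩⟩
      · exact ⟨[0,1], by simp [bow],
          Finset.mem_image.mpr ⟨x.take (n-1), hxv, hxt⟩⟩
      · exact ⟨[2,2], by simp [bow],
          Finset.mem_image.mpr ⟨x.take (n-1), hxv, hxt⟩⟩
      · exact ⟨[0,3], by simp [bow],
          Finset.mem_image.mpr ⟨x.take (n-1), hxv, hxt⟩⟩
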